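/- Under the assumption that for every sample s the values Y s, Xa s, Xd s are pairwise distinct, the DFT warm spare gate WSP Y Xa Xd equals the DRBD spare construct R_WSP Y Xa Xd. -/
import Mathlib

noncomputable def D_BEFORE {α : Type*} (A B : α → EReal) : α → EReal :=
  fun s => if A s < B s then A s else ⊤
noncomputable def D_SIMULT {α : Type*} (A B : α → EReal) : α → EReal :=
  fun s => if A s = B s then A s else ⊤
noncomputable def R_AFTER {α : Type*} (X Y : α → EReal) : α → EReal :=
  fun s => if Y s < X s then X s else ⊤

noncomputable def WSP {α : Type*} (Y Xa Xd : α → EReal) : α → EReal :=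
  fun s => min (min (max (Y s) (D_BEFORE Xd Y s)) (max (Xa s) (D_BEFORE Y Xa s)))
    (min (D_SIMULT Y Xa s) (D_SIMULT Y Xd s))

noncomputable def R_WSP {α : Type*} (Y Xa Xd : α → EReal) : α → EReal :=
  fun s => min (R_AFTER Xa Y s) (R_AFTER Y Xd s)

theorem wsp_eq_r_wsp {α : Type*} (Y Xa Xd : α → EReal)
    (h : ∀ s, List.Pairwise (· ≠ ·) [Y s, Xa s, Xd s]) :
    WSP Y Xa Xd = R_WSP Y Xa Xd := by
  funext s
  have hya : Y s ≠ Xa s := (List.pairwise_cons.mp (h s)).1 _ (by simp)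
  have hyd : Y s ≠ Xd s := (List.pairwise_cons.mp (h s)).1 _ (by simp)
  have had : Xa s ≠ Xd s :=
    (List.pairwise_cons.mp (List.pairwise_cons.mp (h s)).2).1 _ (by simp)
  simp only [WSP, R_WSP, D_BEFORE, D_SIMULT, R_AFTER]
  rcases lt_trichotomy (Y s) (Xa s) with h1|h1|h1 <;>
    rcases lt_trichotomy (Y s) (Xd s) with h2|h2|h2 <;>
    rcases lt_trichotomy (Xa s) (Xd s) with h3|h3|h3
  all_goals first
  | exact absurd h1 hya
  | exact absurd h2 hyd
  | exact absurd h3 had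
  | (simp_all [min_def, max_def, h1.le, h2.le, h3.le, h1.not_ge, h2.not_ge,
      h3.not_ge, h1.not_gt, h2.not_gt, h3.not_gt])
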